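/- arXiv:1107.3444 — 3 statements merged into one kernel-verified Lean document; each statement's English description precedes it below -/
import Mathlib

section
/- Let G be a group, S and T sets, α : G → Sym(S) and β : G → Sym(T) group homomorphisms, and π : T → S a surjective map which is equivariant: π(β(g)(t)) = α(g)(π(t)) for all g ∈ G, t ∈ T. Assume that the action of G on S via α is transitive and that the image of β is an abelian subgroup of Sym(T). Fix s₀ ∈ S, let H = {g ∈ G : α(g)(s₀) = s₀} be the stabilizer of s₀, and let F = π⁻¹(s₀). Then: (a) for every h ∈ H the permutation β(h) maps F bijectively onto itself, so restriction to F defines a homomorphism ρ : H → Sym(F); (b) ker β ⊆ ker α, so there is a well-defined surjective homomorphism θ : im(β) → im(α) with θ(β(g)) = α(g) for all g ∈ G; (c) every element of ker θ = β(ker α) maps F onto itself, and the homomorphism ker θ → Sym(F) given by restriction to F is injective with image equal to im(ρ). In particular there is a short exact sequence 1 → im(ρ) → im(β) → im(α) → 1. -/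
section MonodromyAux

variable {S T : Type*}

theorem Equiv.Perm.apply_inv_self {α : Type*} (f : Equiv.Perm α) (x : α) : f (f⁻¹ x) = x :=
  f.apply_symm_apply x

theorem Equiv.Perm.inv_apply_self {α : Type*} (f : Equiv.Perm α) (x : α) : f⁻¹ (f x) = x :=
  f.symm_apply_apply x

/-- Restrict a permutation of `T` preserving the fiber `π⁻¹(s₀)` to a permutation
of that fiber. -/
def monodromyPermRestrict (π : T → S) (s₀ : S) (x : Equiv.Perm T)
    (hx : ∀ t, π t = s₀ → π (x t) = s₀) (hx' : ∀ t, π t = s₀ → π (x⁻¹ t) = s₀) :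
    Equiv.Perm {t : T // π t = s₀} where
  toFun t := ⟨x t.1, hx t.1 t.2⟩
  invFun t := ⟨x⁻¹ t.1, hx' t.1 t.2⟩
  left_inv t := Subtype.ext (x.inv_apply_self t.1)
  right_inv t := Subtype.ext (x.apply_inv_self t.1)

@[simp] lemma monodromyPermRestrict_apply (π : T → S) (s₀ : S) (x : Equiv.Perm T)
    (hx : ∀ t, π t = s₀ → π (x t) = s₀) (hx' : ∀ t, π t = s₀ → π (x⁻¹ t) = s₀)
    (t : {t : T // π t = s₀}) :
    (monodromyPermRestrict π s₀ x hx hx' t : T) = x t.1 := rfl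

end MonodromyAux

/-- The group-theoretic exact sequence of monodromy groups: given a transitive action
`α : G → Sym S`, an action `β : G → Sym T` with abelian image, and a surjective
equivariant map `π : T → S`, with `H` the stabilizer of `s₀ ∈ S` and `F = π⁻¹(s₀)`:
(a) every `β h`, `h ∈ H`, restricts to a permutation of `F`, giving `ρ : H → Sym F`;
(b) `ker β ⊆ ker α` and there is a surjective `θ : im β → im α` with `θ(β g) = α g`;
(c) `ker θ = β(ker α)`, its elements preserve `F`, and restriction to `F` gives an
injective homomorphism `ker θ → Sym F` with image `im ρ`. In particular there is a short
exact sequence `1 → im ρ → im β → im α → 1`. -/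
theorem monodromy_exact_sequence {G S T : Type*} [Group G]
    (α : G →* Equiv.Perm S) (β : G →* Equiv.Perm T)
    (π : T → S) (hπ : Function.Surjective π)
    (heq : ∀ (g : G) (t : T), π (β g t) = α g (π t))
    (htrans : ∀ s s' : S, ∃ g : G, α g s = s')
    (habel : ∀ g g' : G, β g * β g' = β g' * β g)
    (s₀ : S) (H : Subgroup G) (hH : ∀ g : G, g ∈ H ↔ α g s₀ = s₀) :
    -- (a) every `β h` with `h ∈ H` maps `F = π⁻¹(s₀)` into itself …
    (∀ g : G, α g s₀ = s₀ → ∀ t : T, π t = s₀ → π (β g t) = s₀) ∧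
    -- (b) `ker β ⊆ ker α` …
    (∀ g : G, β g = 1 → α g = 1) ∧
    -- … so that restriction defines `ρ : H → Sym F`, and there is a well-defined
    -- surjective `θ : im β → im α` with `θ (β g) = α g`:
    ∃ (ρ : H →* Equiv.Perm {t : T // π t = s₀}) (θ : β.range →* α.range),
      (∀ (h : H) (t : T) (ht : π t = s₀), ((ρ h ⟨t, ht⟩ : {t : T // π t = s₀}) : T) = β h t) ∧
      (∀ g : G, ((θ ⟨β g, ⟨g, rfl⟩⟩ : α.range) : Equiv.Perm S) = α g) ∧
      Function.Surjective θ ∧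
      -- (c) `ker θ = β (ker α)` …
      (∀ x : β.range, x ∈ θ.ker ↔ ∃ g : G, α g = 1 ∧ β g = (x : Equiv.Perm T)) ∧
      -- … and restriction to `F` is an injective homomorphism `ker θ → Sym F`
      -- whose image is `im ρ`:
      ∃ ι : θ.ker →* Equiv.Perm {t : T // π t = s₀},
        (∀ (x : θ.ker) (t : T) (ht : π t = s₀),
          ((ι x ⟨t, ht⟩ : {t : T // π t = s₀}) : T) = ((x : β.range) : Equiv.Perm T) t) ∧
        Function.Injective ι ∧ ι.range = ρ.range := by
  -- (a)
  have ha : ∀ g : G, α g s₀ = s₀ → ∀ t : T, π t = s₀ → π (β g t) = s₀ := by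
    intro g hg t ht
    rw [heq, ht, hg]
  -- (b)
  have hb : ∀ g : G, β g = 1 → α g = 1 := by
    intro g hg
    ext s
    obtain ⟨t, rfl⟩ := hπ s
    rw [← heq, hg]
    simp
  -- the image of α is abelian
  have hαcomm : ∀ g g' : G, α g * α g' = α g' * α g := by
    intro g g'
    have h1 : β (g * g' * (g' * g)⁻¹) = 1 := by
      rw [map_mul, map_inv, map_mul, map_mul, habel g g']
      group
    have h2 := hb _ h1
    rw [map_mul, map_inv, map_mul, map_mul, mul_inv_eq_one] at h2
    exact h2
  -- any stabilizer element acts trivially via α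
  have hfix : ∀ g : G, α g s₀ = s₀ → α g = 1 := by
    intro g hg
    ext s
    obtain ⟨g', hg'⟩ := htrans s₀ s
    have : α g (α g' s₀) = α g' (α g s₀) := by
      rw [← Equiv.Perm.mul_apply, ← Equiv.Perm.mul_apply, hαcomm]
    rw [hg'] at this
    rw [this, hg, hg']
    simp
  -- inverse stabilizer
  have hinv : ∀ g : G, α g s₀ = s₀ → α g⁻¹ s₀ = s₀ := by
    intro g hg
    apply (α g).injective
    rw [map_inv]
    rw [Equiv.Perm.apply_inv_self, hg]
  refine ⟨ha, hb, ?_⟩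
  -- ρ
  have hmem : ∀ h : H, α (h : G) s₀ = s₀ := fun h => (hH h.1).mp h.2
  let ρ : H →* Equiv.Perm {t : T // π t = s₀} := MonoidHom.mk'
    (fun h => monodromyPermRestrict π s₀ (β h.1)
      (fun t ht => ha h.1 (hmem h) t ht)
      (fun t ht => by rw [← map_inv]; exact ha h.1⁻¹ (hinv h.1 (hmem h)) t ht))
    (by
      intro a b
      apply Equiv.ext
      intro t
      apply Subtype.ext
      simp [map_mul])
  -- θ
  have hkerle : ∀ x ∈ β.ker, α.rangeRestrict x = 1 := by
    intro x hx
    have := hb x hx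
    exact Subtype.ext (by simpa using this)
  set θ : β.range →* α.range :=
    (QuotientGroup.lift β.ker α.rangeRestrict hkerle).comp
      (QuotientGroup.quotientKerEquivRange β).symm.toMonoidHom with hθ
  have hθspec : ∀ g : G, θ ⟨β g, ⟨g, rfl⟩⟩ = α.rangeRestrict g := by
    intro g
    have hsymm : (QuotientGroup.quotientKerEquivRange β).symm ⟨β g, ⟨g, rfl⟩⟩
        = QuotientGroup.mk g := by
      apply (QuotientGroup.quotientKerEquivRange β).injective
      rw [MulEquiv.apply_symm_apply]
      rfl
    rw [hθ]
    simp only [MonoidHom.comp_apply, MulEquiv.coe_toMonoidHom, hsymm]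
    rfl
  have hθspec' : ∀ g : G, ((θ ⟨β g, ⟨g, rfl⟩⟩ : α.range) : Equiv.Perm S) = α g := by
    intro g
    rw [hθspec]
    rfl
  have hθsurj : Function.Surjective θ := by
    rintro ⟨y, g, rfl⟩
    exact ⟨⟨β g, ⟨g, rfl⟩⟩, hθspec g⟩
  -- kernel characterization
  have hc : ∀ x : β.range, x ∈ θ.ker ↔ ∃ g : G, α g = 1 ∧ β g = (x : Equiv.Perm T) := by
    intro x
    constructor
    · intro hx
      obtain ⟨g, hg⟩ := x.2
      refine ⟨g, ?_, hg⟩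
      have hx' : x = ⟨β g, ⟨g, rfl⟩⟩ := Subtype.ext hg.symm
      rw [hx', MonoidHom.mem_ker] at hx
      have := congrArg (Subtype.val) (hθspec g ▸ hx)
      simpa using this
    · rintro ⟨g, hg1, hg2⟩
      have hx' : x = ⟨β g, ⟨g, rfl⟩⟩ := Subtype.ext hg2.symm
      rw [hx', MonoidHom.mem_ker]
      apply Subtype.ext
      rw [hθspec' g, hg1]
      rfl
  -- elements of ker θ preserve fibers
  have hpres : ∀ x : θ.ker, ∀ t : T, π (((x : β.range) : Equiv.Perm T) t) = π t := by
    intro x t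
    obtain ⟨g, hg1, hg2⟩ := (hc x.1).mp x.2
    rw [← hg2, heq, hg1]
    simp
  have hpres' : ∀ x : θ.ker, ∀ t : T, π (((x : β.range) : Equiv.Perm T)⁻¹ t) = π t := by
    intro x t
    conv_rhs => rw [← Equiv.Perm.apply_inv_self ((x : β.range) : Equiv.Perm T) t]
    rw [hpres x]
  -- ι
  let ι : θ.ker →* Equiv.Perm {t : T // π t = s₀} := MonoidHom.mk'
    (fun x => monodromyPermRestrict π s₀ ((x : β.range) : Equiv.Perm T)
      (fun t ht => by rw [hpres x]; exact ht)
      (fun t ht => by rw [hpres' x]; exact ht))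
    (by
      intro a b
      apply Equiv.ext
      intro t
      apply Subtype.ext
      rfl)
  refine ⟨ρ, θ, fun h t ht => rfl, hθspec', hθsurj, hc, ι, fun x t ht => rfl, ?_, ?_⟩
  · -- injectivity
    rw [injective_iff_map_eq_one]
    intro x hx
    obtain ⟨g, hg1, hg2⟩ := (hc x.1).mp x.2
    have hfixF : ∀ t : T, π t = s₀ → β g t = t := by
      intro t ht
      have := congrArg (fun e => (e ⟨t, ht⟩ : T)) hx
      simpa [hg2, ι] using this
    have hβg : β g = 1 := by
      ext t
      obtain ⟨g', hg'⟩ := htrans s₀ (π t)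
      have hu : π (β g'⁻¹ t) = s₀ := by
        rw [heq, map_inv]
        apply (α g').injective
        rw [Equiv.Perm.apply_inv_self, hg']
      have hfixu : β g (β g'⁻¹ t) = β g'⁻¹ t := hfixF _ hu
      have hcomm : β g (β g' (β g'⁻¹ t)) = β g' (β g (β g'⁻¹ t)) := by
        have h := congrArg (fun e : Equiv.Perm T => e (β g'⁻¹ t)) (habel g g')
        simpa [Equiv.Perm.mul_apply] using h
      rw [hfixu] at hcomm
      have ht' : β g' (β g'⁻¹ t) = t := by
        rw [map_inv, Equiv.Perm.apply_inv_self]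
      rw [ht'] at hcomm
      simpa using hcomm
    apply Subtype.ext
    apply Subtype.ext
    rw [← hg2, hβg]
    rfl
  · -- range equality
    apply le_antisymm
    · rintro y ⟨x, rfl⟩
      obtain ⟨g, hg1, hg2⟩ := (hc x.1).mp x.2
      have hgH : g ∈ H := (hH g).mpr (by rw [hg1]; rfl)
      refine ⟨⟨g, hgH⟩, ?_⟩
      apply Equiv.ext
      intro t
      apply Subtype.ext
      show (β g) t.1 = ((x : β.range) : Equiv.Perm T) t.1
      rw [hg2]
    · rintro y ⟨h, rfl⟩
      have hα1 : α (h : G) = 1 := hfix h.1 (hmem h)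
      have hker : (⟨β h.1, ⟨h.1, rfl⟩⟩ : β.range) ∈ θ.ker := (hc _).mpr ⟨h.1, hα1, rfl⟩
      refine ⟨⟨⟨β h.1, ⟨h.1, rfl⟩⟩, hker⟩, ?_⟩
      apply Equiv.ext
      intro t
      apply Subtype.ext
      rfl
end

section
/- Let G be a finitely generated abelian group, S and T sets, α : G → Sym(S) and β : G → Sym(T) group homomorphisms, and π : T → S a surjective equivariant map (π(β(g)(t)) = α(g)(π(t)) for all g, t). Assume the action of G on S via α is transitive. Fix s₀ ∈ S, let H = {g ∈ G : α(g)(s₀) = s₀} and F = π⁻¹(s₀); every β(h) with h ∈ H maps F bijectively to itself, giving a homomorphism ρ : H → Sym(F). Then rank(im β) ≤ rank(im α) + rank(im ρ). -/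
/-- The rank of a (finitely generated abelian) group: the smallest number `k` such that
the group can be generated by `k` elements (equivalently, for finitely generated abelian
groups, the smallest number of cyclic groups in a direct sum decomposition). -/
noncomputable def grpRank (G : Type*) [Group G] : ℕ :=
  sInf {n | ∃ g : Fin n → G, Subgroup.closure (Set.range g) = ⊤}

lemma grpRank_le {Q : Type*} [Group Q] {n : ℕ} (g : Fin n → Q)
    (hg : Subgroup.closure (Set.range g) = ⊤) : grpRank Q ≤ n :=
  Nat.sInf_le ⟨g, hg⟩

lemma grpRank_spec (Q : Type*) [Group Q] [Group.FG Q] :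
    ∃ g : Fin (grpRank Q) → Q, Subgroup.closure (Set.range g) = ⊤ := by
  have hne : {n | ∃ g : Fin n → Q, Subgroup.closure (Set.range g) = ⊤}.Nonempty := by
    obtain ⟨S, -, hS⟩ := Group.rank_spec Q
    refine ⟨S.card, fun i => (S.equivFin.symm i : Q), ?_⟩
    have : Set.range (fun i => (S.equivFin.symm i : Q)) = (S : Set Q) := by
      ext q
      constructor
      · rintro ⟨i, rfl⟩; exact (S.equivFin.symm i).2
      · intro hq; exact ⟨S.equivFin ⟨q, hq⟩, by simp⟩
    rw [this, hS]
  exact Nat.sInf_mem hne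

lemma subgroup_fg_of_comm_fg {G : Type*} [CommGroup G] [Group.FG G] (H : Subgroup G) :
    Group.FG H := by
  rw [Group.fg_iff_subgroup_fg, Subgroup.fg_iff_add_fg]
  have : Module.Finite ℤ (Additive G) := Module.Finite.iff_addGroup_fg.mpr inferInstance
  have hfg : (AddSubgroup.toIntSubmodule H.toAddSubgroup).FG := IsNoetherian.noetherian _
  have := (Submodule.fg_iff_addSubgroup_fg _).mp hfg
  simpa using this

/-- For a finitely generated abelian group `G`, a transitive action `α : G → Sym S`, an
action `β : G → Sym T`, and a surjective equivariant map `π : T → S`, with `H` the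
stabilizer of `s₀` and `ρ : H → Sym F` the restriction of `β` to `F = π⁻¹(s₀)`:
`rank (im β) ≤ rank (im α) + rank (im ρ)`. -/
theorem rank_image_le {G S T : Type*} [CommGroup G] [Group.FG G]
    (α : G →* Equiv.Perm S) (β : G →* Equiv.Perm T)
    (π : T → S) (hπ : Function.Surjective π)
    (heq : ∀ (g : G) (t : T), π (β g t) = α g (π t))
    (htrans : ∀ s s' : S, ∃ g : G, α g s = s')
    (s₀ : S) (H : Subgroup G) (hH : ∀ g : G, g ∈ H ↔ α g s₀ = s₀)
    (ρ : H →* Equiv.Perm {t : T // π t = s₀})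
    (hρ : ∀ (h : H) (t : T) (ht : π t = s₀),
      ((ρ h ⟨t, ht⟩ : {t : T // π t = s₀}) : T) = β h t) :
    grpRank β.range ≤ grpRank α.range + grpRank ρ.range := by
  classical
  haveI : Group.FG H := subgroup_fg_of_comm_fg H
  set a := grpRank α.range with ha
  set b := grpRank ρ.range with hb
  obtain ⟨gA, hgA⟩ := grpRank_spec α.range
  obtain ⟨gR, hgR⟩ := grpRank_spec ρ.range
  -- lift generators
  choose x hx using fun i => (gA i).2
  choose y hy using fun j => (gR j).2
  -- x : Fin a → G with α.rangeRestrict (x i) = gA i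
  have hx' : ∀ i, α.rangeRestrict (x i) = gA i := fun i => Subtype.ext (hx i)
  have hy' : ∀ j, ρ.rangeRestrict (y j) = gR j := fun j => Subtype.ext (hy j)
  -- the combined generating family for β.range
  set c : Fin (a + b) → β.range :=
    Fin.append (fun i => β.rangeRestrict (x i)) (fun j => β.rangeRestrict ((y j : G))) with hc
  refine grpRank_le c ?_
  rw [eq_top_iff]
  rintro ⟨-, g, rfl⟩ -
  show β.rangeRestrict g ∈ Subgroup.closure (Set.range c)
  -- find g' in the subgroup generated by x with α g' = α g
  have hmapA : Subgroup.map α.rangeRestrict (Subgroup.closure (Set.range x)) = ⊤ := by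
    rw [MonoidHom.map_closure, ← Set.range_comp]
    have : (α.rangeRestrict ∘ x) = gA := funext hx'
    rw [this, hgA]
  have : α.rangeRestrict g ∈ Subgroup.map α.rangeRestrict (Subgroup.closure (Set.range x)) := by
    rw [hmapA]; trivial
  obtain ⟨g', hg'mem, hg'⟩ := this
  have hαg' : α g' = α g := congrArg Subtype.val hg'
  -- k = g * g'⁻¹ lies in the stabilizer H
  have hkH : g * g'⁻¹ ∈ H := by
    rw [hH, map_mul, map_inv, hαg']
    simp
  set k : H := ⟨g * g'⁻¹, hkH⟩ with hk
  -- find h' in the subgroup generated by y with ρ h' = ρ k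
  have hmapR : Subgroup.map ρ.rangeRestrict (Subgroup.closure (Set.range y)) = ⊤ := by
    rw [MonoidHom.map_closure, ← Set.range_comp]
    have : (ρ.rangeRestrict ∘ y) = gR := funext hy'
    rw [this, hgR]
  have : ρ.rangeRestrict k ∈ Subgroup.map ρ.rangeRestrict (Subgroup.closure (Set.range y)) := by
    rw [hmapR]; trivial
  obtain ⟨h', hh'mem, hh'⟩ := this
  have hρh' : ρ h' = ρ k := congrArg Subtype.val hh'
  -- the element m = k * h'⁻¹ has trivial ρ, hence trivial β
  have hρm : ρ (k * h'⁻¹) = 1 := by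
    rw [map_mul, map_inv, hρh']
    simp
  have hβm : β ((k * h'⁻¹ : H) : G) = 1 := by
    ext t
    obtain ⟨aG, haG⟩ := htrans (π t) s₀
    have hft : π (β aG t) = s₀ := by rw [heq]; exact haG
    have hfix : β ((k * h'⁻¹ : H) : G) (β aG t) = β aG t := by
      have h1 := hρ (k * h'⁻¹) (β aG t) hft
      rw [hρm] at h1
      simpa using h1.symm
    have hcomm : β ((k * h'⁻¹ : H) : G) (β aG t)
        = β aG (β ((k * h'⁻¹ : H) : G) t) := by
      rw [← Equiv.Perm.mul_apply, ← Equiv.Perm.mul_apply, ← map_mul, ← map_mul, mul_comm]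
    have := hcomm.symm.trans hfix
    simpa using (β aG).injective this
  -- hence β k = β h'
  have hβk : β ((k : G)) = β ((h' : G)) := by
    have hco : ((k * h'⁻¹ : H) : G) = (k : G) * ((h' : G))⁻¹ := rfl
    rw [hco, map_mul, map_inv, mul_inv_eq_one] at hβm
    exact hβm
  -- decompose β g
  have hβg : β g = β g' * β ((h' : G)) := by
    rw [← hβk, ← map_mul]
    congr 1
    show g = g' * (g * g'⁻¹)
    rw [mul_comm g g'⁻¹, mul_inv_cancel_left]
  -- memberships
  have hmem1 : β.rangeRestrict g' ∈ Subgroup.closure (Set.range c) := by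
    have h1 : β.rangeRestrict g' ∈
        Subgroup.map β.rangeRestrict (Subgroup.closure (Set.range x)) :=
      Subgroup.mem_map_of_mem _ hg'mem
    rw [MonoidHom.map_closure] at h1
    refine Subgroup.closure_mono ?_ h1
    rintro - ⟨-, ⟨i, rfl⟩, rfl⟩
    exact ⟨Fin.castAdd b i, by rw [hc]; exact Fin.append_left _ _ i⟩
  have hmem2 : β.rangeRestrict ((h' : G)) ∈ Subgroup.closure (Set.range c) := by
    have h1 : (β.rangeRestrict.comp H.subtype) h' ∈
        Subgroup.map (β.rangeRestrict.comp H.subtype) (Subgroup.closure (Set.range y)) :=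
      Subgroup.mem_map_of_mem _ hh'mem
    rw [MonoidHom.map_closure] at h1
    refine Subgroup.closure_mono ?_ h1
    rintro - ⟨-, ⟨j, rfl⟩, rfl⟩
    exact ⟨Fin.natAdd a j, by rw [hc]; exact Fin.append_right _ _ j⟩
  have : β.rangeRestrict g = β.rangeRestrict g' * β.rangeRestrict ((h' : G)) := by
    rw [← map_mul]
    exact Subtype.ext (by simpa using hβg)
  rw [this]
  exact mul_mem hmem1 hmem2
end

section
/- Let Γ be a group and let M : ℤⁿ → Γ be a group homomorphism whose image (a finitely generated abelian group) has rank k. Then there exist a surjective group homomorphism p : ℤⁿ → ℤᵏ and a group homomorphism M' : ℤᵏ → Γ such that M = M' ∘ p. -/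
/-- The rank of a (finitely generated) abelian group: the smallest number `k` such that
the group can be generated by `k` elements (equivalently, for finitely generated abelian
groups, the smallest number of cyclic groups in a direct sum decomposition). -/
noncomputable def addRank (G : Type*) [AddGroup G] : ℕ :=
  sInf {n | ∃ g : Fin n → G, AddSubgroup.closure (Set.range g) = ⊤}

/-- If `M : ℤⁿ → Γ` is a homomorphism whose image has rank `k`, then `M` factors as
`M = M' ∘ p` for some surjective homomorphism `p : ℤⁿ → ℤᵏ` and some homomorphism
`M' : ℤᵏ → Γ`. -/
theorem factors_through_zk {Γ : Type*} [Group Γ] (n k : ℕ)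
    (M : (Fin n → ℤ) →+ Additive Γ) (hk : addRank M.range = k) :
    ∃ (p : (Fin n → ℤ) →+ (Fin k → ℤ)) (M' : (Fin k → ℤ) →+ Additive Γ),
      Function.Surjective p ∧ M = M'.comp p := by
  classical
  -- The range is commutative
  letI : AddCommGroup M.range :=
    { (inferInstance : AddGroup M.range) with
      add_comm := by
        rintro ⟨x, a, rfl⟩ ⟨y, b, rfl⟩
        ext
        show M a + M b = M b + M a
        rw [← map_add, ← map_add, add_comm] }
  letI : Module ℤ M.range := AddCommGroup.toIntModule _
  -- rangeRestrict as a linear map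
  let q₀ : (Fin n → ℤ) →ₗ[ℤ] M.range := M.rangeRestrict.toIntLinearMap
  have hq₀ : Function.Surjective q₀ := M.rangeRestrict_surjective
  -- the set defining addRank is nonempty
  have hNE : {m | ∃ g : Fin m → M.range, AddSubgroup.closure (Set.range g) = ⊤}.Nonempty := by
    refine ⟨n, fun i => q₀ (Pi.single i 1), ?_⟩
    rw [← Submodule.span_int_eq_addSubgroupClosure]
    suffices h : Submodule.span ℤ (Set.range fun i => q₀ (Pi.single i 1)) = ⊤ by
      rw [h]; rfl
    have : (Set.range fun i => q₀ (Pi.single i 1)) = q₀ '' Set.range (fun i => Pi.single i 1) := by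
      rw [← Set.range_comp]; rfl
    have hs : Submodule.span ℤ (Set.range fun i : Fin n => Pi.single i (1:ℤ)) = ⊤ := by
      have h := (Pi.basisFun ℤ (Fin n)).span_eq
      have : (Set.range fun i : Fin n => Pi.single i (1:ℤ))
          = Set.range (Pi.basisFun ℤ (Fin n)) := by
        ext x; simp [Pi.basisFun_apply]
      rw [this]; exact h
    rw [this, ← Submodule.map_span, hs, Submodule.map_top, LinearMap.range_eq_top.mpr hq₀]
  -- get a generating family of size k
  have hmem := Nat.sInf_mem hNE
  rw [show sInf {m | ∃ g : Fin m → M.range, AddSubgroup.closure (Set.range g) = ⊤} =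
      addRank M.range from rfl, hk] at hmem
  obtain ⟨g, hg⟩ := hmem
  have hgspan : Submodule.span ℤ (Set.range g) = ⊤ := by
    apply Submodule.toAddSubgroup_injective
    rw [Submodule.span_int_eq_addSubgroupClosure, hg]; rfl
  -- q : ℤᵏ → M.range surjective
  let q : (Fin k → ℤ) →ₗ[ℤ] M.range := (Pi.basisFun ℤ (Fin k)).constr ℤ g
  have hq : Function.Surjective q := by
    rw [← LinearMap.range_eq_top, Module.Basis.constr_range, hgspan]
  -- lift M along q
  obtain ⟨p₀, hp₀⟩ := Module.projective_lifting_property q q₀ hq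
  -- the image of p₀
  set L := LinearMap.range p₀ with hL
  obtain ⟨r, bL⟩ := L.basisOfPid (Pi.basisFun ℤ (Fin k))
  -- q maps L onto M.range
  have hqL : ∀ y : M.range, ∃ x ∈ L, q x = y := by
    intro y
    obtain ⟨z, hz⟩ := hq₀ y
    exact ⟨p₀ z, ⟨z, rfl⟩, by rw [← hz, ← hp₀]; rfl⟩
  -- k ≤ r
  have hkr : k ≤ r := by
    rw [← hk]
    apply Nat.sInf_le
    refine ⟨fun i => q (bL i), ?_⟩
    rw [← Submodule.span_int_eq_addSubgroupClosure]
    suffices h : Submodule.span ℤ (Set.range fun i => q ((bL i : (Fin k → ℤ)))) = ⊤ by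
      rw [h]; rfl
    have himg : (Set.range fun i => q (bL i : (Fin k → ℤ)))
        = q '' (L.subtype '' Set.range bL) := by
      rw [Set.image_image, ← Set.range_comp]; rfl
    rw [himg, ← Submodule.map_span, ← Submodule.map_span, bL.span_eq, Submodule.map_top,
      Submodule.range_subtype]
    rw [eq_top_iff]
    rintro y -
    obtain ⟨x, hx, hxy⟩ := hqL y
    exact ⟨x, hx, hxy⟩
  -- r ≤ k
  have hrk : r ≤ k := by
    have h1 : Module.finrank ℤ L = r := by
      simpa using Module.finrank_eq_card_basis bL
    have h2 : Module.finrank ℤ L ≤ k := by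
      have := Submodule.finrank_le L
      simpa [Module.finrank_fintype_fun_eq_card] using this
    omega
  have hrk' : r = k := le_antisymm hrk hkr
  -- basis of L indexed by Fin k
  let bL' : Module.Basis (Fin k) ℤ L := bL.reindex (finCongr hrk')
  let e : L ≃ₗ[ℤ] (Fin k → ℤ) := bL'.equivFun
  -- define p and M'
  let p : (Fin n → ℤ) →ₗ[ℤ] (Fin k → ℤ) := e.toLinearMap.comp p₀.rangeRestrict
  have hpsurj : Function.Surjective p :=
    e.surjective.comp (LinearMap.surjective_rangeRestrict p₀)
  refine ⟨p.toAddMonoidHom,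
    (M.range.subtype.comp q.toAddMonoidHom).comp
      ((L.subtype.comp e.symm.toLinearMap).toAddMonoidHom), hpsurj, ?_⟩
  ext x
  have h1 : q (p₀ x) = q₀ x := by rw [← hp₀]; rfl
  simp only [AddMonoidHom.comp_apply, LinearMap.toAddMonoidHom_coe, LinearMap.comp_apply]
  show M x = (M.range.subtype) (q (L.subtype (e.symm (e (p₀.rangeRestrict x)))))
  rw [e.symm_apply_apply]
  show M x = (q (p₀ x) : Additive Γ)
  rw [h1]
  rfl
end
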